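/- A translation invariant subspace V ⊆ K[x_1,...,x_n] is non-degenerate (no nonzero linear combination of ∂/∂x_1,...,∂/∂x_n annihilates V) if and only if V generates K[x_1,...,x_n] as a K-algebra. -/

import Mathlib

open MvPolynomial

set_option linter.unusedSectionVars false

namespace NondegAux

variable {K : Type*} [Field K] [CharZero K] {n : ℕ}

/-- Sum of a finitely supported function on `Fin n` as a `Finset.sum`. -/
lemma msum_eq (m : Fin n →₀ ℕ) : (m.sum fun _ k => k) = ∑ i, m i :=
  Finsupp.sum_fintype _ _ (fun _ => rfl)

lemma msum_add (m : Fin n →₀ ℕ) (i : Fin n) :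
    ((m + Finsupp.single i 1).sum fun _ k => k) = (m.sum fun _ k => k) + 1 := by
  rw [msum_eq, msum_eq]
  simp [Finsupp.add_apply, Finsupp.single_apply, Finset.sum_add_distrib]

lemma aux_coeff_pderiv (i : Fin n) (f : MvPolynomial (Fin n) K) (m : Fin n →₀ ℕ) :
    coeff m (pderiv i f) = ((m i : K) + 1) * coeff (m + Finsupp.single i 1) f := by
  induction f using MvPolynomial.induction_on' with
  | add p q hp hq => simp [map_add, coeff_add, hp, hq, mul_add]
  | monomial s a =>
    rw [pderiv_monomial, coeff_monomial, coeff_monomial]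
    by_cases h2 : s = m + Finsupp.single i 1
    · have hsm : s - Finsupp.single i 1 = m := by
        subst h2; ext j
        simp only [Finsupp.tsub_apply, Finsupp.add_apply, Finsupp.single_apply]
        omega
      have hsi : s i = m i + 1 := by
        subst h2
        simp [Finsupp.add_apply, Finsupp.single_apply]
      rw [if_pos hsm, if_pos h2, hsi]
      push_cast
      ring
    · rw [if_neg h2, mul_zero]
      by_cases h1 : s - Finsupp.single i 1 = m
      · rw [if_pos h1]
        have hsi : s i = 0 := by
          by_contra hne
          apply h2
          ext j
          simp only [Finsupp.add_apply, Finsupp.single_apply, ← h1, Finsupp.tsub_apply]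
          rcases eq_or_ne i j with rfl | hij
          · simp; omega
          · simp [hij]
        simp [hsi]
      · rw [if_neg h1]

lemma aux_pderiv_zero_or_lt (i : Fin n) (f : MvPolynomial (Fin n) K) :
    pderiv i f = 0 ∨ (pderiv i f).totalDegree < f.totalDegree := by
  by_cases h : pderiv i f = 0
  · exact Or.inl h
  · right
    obtain ⟨m, hm, hsup⟩ := Finset.exists_mem_eq_sup (pderiv i f).support
      (Finset.nonempty_iff_ne_empty.mpr (mt MvPolynomial.support_eq_empty.mp h)) (fun m : Fin n →₀ ℕ => m.sum fun _ k => k)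
    have hc : coeff m (pderiv i f) ≠ 0 := MvPolynomial.mem_support_iff.mp hm
    rw [aux_coeff_pderiv] at hc
    have hc2 : coeff (m + Finsupp.single i 1) f ≠ 0 := by
      intro h0; rw [h0, mul_zero] at hc; exact hc rfl
    have hle := MvPolynomial.le_totalDegree (MvPolynomial.mem_support_iff.mpr hc2)
    rw [msum_add] at hle
    calc (pderiv i f).totalDegree = m.sum fun _ k => k := hsup
    _ < f.totalDegree := by omega

lemma aux_eq_C_of_pderiv (f : MvPolynomial (Fin n) K) (h : ∀ i, pderiv i f = 0) :
    f = C (constantCoeff f) := by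
  ext m
  rcases eq_or_ne m 0 with rfl | hm
  · simp [coeff_C, constantCoeff_eq]
  · have : ∃ i, m i ≠ 0 := by
      by_contra hc
      push_neg at hc
      exact hm (Finsupp.ext fun j => hc j)
    obtain ⟨i, hi⟩ := this
    have hrec : (m - Finsupp.single i 1) + Finsupp.single i 1 = m := by
      ext j
      simp only [Finsupp.add_apply, Finsupp.tsub_apply, Finsupp.single_apply]
      rcases eq_or_ne i j with rfl | hij
      · simp; omega
      · simp [hij]
    have := aux_coeff_pderiv i f (m - Finsupp.single i 1)
    rw [h i, hrec] at this
    have hne : (((m - Finsupp.single i 1 : Fin n →₀ ℕ) i : K) + 1) ≠ 0 :=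
      Nat.cast_add_one_ne_zero _
    have : coeff m f = 0 := by
      have := this.symm
      rcases mul_eq_zero.mp this with h1 | h1
      · exact absurd h1 hne
      · exact h1
    rw [this, coeff_C, if_neg (by exact fun h0 => hm h0.symm)]

lemma aux_pderiv_comm (i j : Fin n) (f : MvPolynomial (Fin n) K) :
    pderiv i (pderiv j f) = pderiv j (pderiv i f) := by
  ext m
  rw [aux_coeff_pderiv, aux_coeff_pderiv, aux_coeff_pderiv, aux_coeff_pderiv]
  rcases eq_or_ne i j with rfl | hij
  · ring
  · simp only [Finsupp.add_apply, Finsupp.single_apply, if_neg hij, if_neg (Ne.symm hij),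
      add_zero]
    rw [add_right_comm m (Finsupp.single i 1) (Finsupp.single j 1)]
    ring

/-- Directional derivative operator. -/
noncomputable def Dop (c : Fin n → K) (f : MvPolynomial (Fin n) K) : MvPolynomial (Fin n) K :=
  ∑ i, c i • pderiv i f

lemma Dop_add (c : Fin n → K) (f g : MvPolynomial (Fin n) K) :
    Dop c (f + g) = Dop c f + Dop c g := by
  simp [Dop, map_add, smul_add, Finset.sum_add_distrib]

lemma Dop_sub (c : Fin n → K) (f g : MvPolynomial (Fin n) K) :
    Dop c (f - g) = Dop c f - Dop c g := by
  simp [Dop, map_sub, smul_sub, Finset.sum_sub_distrib]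

lemma Dop_zero (c : Fin n → K) : Dop c (0 : MvPolynomial (Fin n) K) = 0 := by
  simp [Dop]

lemma Dop_C (c : Fin n → K) (a : K) : Dop c (C a : MvPolynomial (Fin n) K) = 0 := by
  simp [Dop, pderiv_C]

lemma Dop_smul (c : Fin n → K) (a : K) (f : MvPolynomial (Fin n) K) :
    Dop c (a • f) = a • Dop c f := by
  simp [Dop, map_smul, Finset.smul_sum, smul_comm a]

lemma Dop_add_c (c c' : Fin n → K) (f : MvPolynomial (Fin n) K) :
    Dop (c + c') f = Dop c f + Dop c' f := by
  simp [Dop, add_smul, Finset.sum_add_distrib]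

lemma Dop_sub_c (c c' : Fin n → K) (f : MvPolynomial (Fin n) K) :
    Dop (c - c') f = Dop c f - Dop c' f := by
  simp [Dop, sub_smul, Finset.sum_sub_distrib]

lemma Dop_single (i : Fin n) (f : MvPolynomial (Fin n) K) :
    Dop (Pi.single i (1 : K)) f = pderiv i f := by
  rw [Dop, Finset.sum_eq_single i]
  · simp
  · intro j _ hj
    simp [Pi.single_eq_of_ne hj]
  · simp

lemma Dop_mul (c : Fin n → K) (f g : MvPolynomial (Fin n) K) :
    Dop c (f * g) = Dop c f * g + f * Dop c g := by
  simp only [Dop, pderiv_mul, smul_add, Finset.sum_add_distrib, smul_mul_assoc,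
    mul_smul_comm, Finset.mul_sum, Finset.sum_mul]

lemma pderiv_Dop (c : Fin n → K) (i : Fin n) (f : MvPolynomial (Fin n) K) :
    pderiv i (Dop c f) = Dop c (pderiv i f) := by
  simp only [Dop, map_sum]
  refine Finset.sum_congr rfl fun j _ => ?_
  rw [Derivation.map_smul, aux_pderiv_comm]

lemma constantCoeff_Dop (c : Fin n → K) (f : MvPolynomial (Fin n) K) :
    constantCoeff (Dop c f) = ∑ i, c i * coeff (Finsupp.single i 1) f := by
  have : ∀ i, constantCoeff (pderiv i f) = coeff (Finsupp.single i 1) f := by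
    intro i
    rw [constantCoeff_eq, coeff, ← MvPolynomial.coeff]
    rw [aux_coeff_pderiv i f 0]
    simp
  simp [Dop, map_sum, MvPolynomial.constantCoeff_smul, this, smul_eq_mul]

/-- Key lemma: on a pderiv-stable set, if all constant coefficients of `Dop c`
vanish then `Dop c` vanishes identically. -/
lemma Dop_eq_zero_of_stable (S : Set (MvPolynomial (Fin n) K))
    (hS : ∀ f ∈ S, ∀ i, pderiv i f ∈ S) (c : Fin n → K)
    (h0 : ∀ f ∈ S, constantCoeff (Dop c f) = 0) :
    ∀ f ∈ S, Dop c f = 0 := by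
  suffices H : ∀ N : ℕ, ∀ f ∈ S, f.totalDegree = N → Dop c f = 0 by
    intro f hf; exact H f.totalDegree f hf rfl
  intro N
  induction N using Nat.strong_induction_on with
  | _ N ih =>
    intro f hf hdeg
    have hder : ∀ i, pderiv i (Dop c f) = 0 := by
      intro i
      rw [pderiv_Dop]
      rcases aux_pderiv_zero_or_lt i f with h | h
      · rw [h, Dop_zero]
      · exact ih (pderiv i f).totalDegree (hdeg ▸ h) (pderiv i f) (hS f hf i) rfl
    rw [aux_eq_C_of_pderiv _ hder, h0 f hf, map_zero]

lemma msum_degree (m : Fin n →₀ ℕ) : (m.sum fun _ k => k) = m.degree := rfl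

lemma msub_add {m : Fin n →₀ ℕ} {i : Fin n} (h : m i ≠ 0) :
    (m - Finsupp.single i 1) + Finsupp.single i 1 = m := by
  ext j
  simp only [Finsupp.add_apply, Finsupp.tsub_apply, Finsupp.single_apply]
  rcases eq_or_ne i j with rfl | hij
  · simp; omega
  · simp [hij]

lemma cc_eq (p : MvPolynomial (Fin n) K) : constantCoeff p = coeff 0 p := by
  rw [constantCoeff_eq]

/-- The linear polynomial with coefficient vector `b`. -/
noncomputable def Lform (b : Fin n → K) : MvPolynomial (Fin n) K := ∑ i, C (b i) * X i

lemma coeff_Lform (b : Fin n → K) (m : Fin n →₀ ℕ) :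
    coeff m (Lform b) = ∑ i, b i * (if Finsupp.single i 1 = m then 1 else 0) := by
  rw [Lform, coeff_sum]
  exact Finset.sum_congr rfl fun i _ => by rw [coeff_C_mul, coeff_X']

lemma coeff_single_Lform (b : Fin n → K) (j : Fin n) :
    coeff (Finsupp.single j 1) (Lform b) = b j := by
  rw [coeff_Lform, Finset.sum_eq_single j]
  · simp
  · intro i _ hij
    rw [if_neg, mul_zero]
    intro hcon
    exact hij (by
      have := Finsupp.single_left_injective (α := Fin n) (one_ne_zero (α := ℕ)) hcon
      exact this)
  · simp

lemma constantCoeff_Lform (b : Fin n → K) : constantCoeff (Lform b) = 0 := by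
  rw [cc_eq, coeff_Lform]
  refine Finset.sum_eq_zero fun i _ => ?_
  rw [if_neg (fun h => one_ne_zero (Finsupp.single_eq_zero.mp h)), mul_zero]

lemma totalDegree_Lform (b : Fin n → K) : (Lform b).totalDegree ≤ 1 := by
  refine (totalDegree_finset_sum _ _).trans (Finset.sup_le fun i _ => ?_)
  refine (totalDegree_mul _ _).trans ?_
  simp [totalDegree_C, totalDegree_X]

lemma pderiv_Lform (b : Fin n → K) (i : Fin n) : pderiv i (Lform b) = C (b i) := by
  rw [Lform, map_sum, Finset.sum_eq_single i]
  · rw [Derivation.leibniz, pderiv_X_self, pderiv_C]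
    simp
  · intro j _ hj
    rw [Derivation.leibniz, pderiv_X_of_ne hj, pderiv_C]
    simp
  · simp

lemma Dop_Lform (c b : Fin n → K) : Dop c (Lform b) = C (∑ i, c i * b i) := by
  rw [Dop]
  have h : ∀ i : Fin n, c i • pderiv i (Lform b) = C (c i * b i) := fun i => by
    rw [pderiv_Lform, smul_eq_C_mul, ← C_mul]
  rw [Finset.sum_congr rfl fun i _ => h i, ← map_sum]

lemma Lform_single (j : Fin n) : Lform (Pi.single j (1 : K)) = X j := by
  rw [Lform, Finset.sum_eq_single j]
  · simp
  · intro i _ hij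
    simp [Pi.single_eq_of_ne hij]
  · simp

/-- Classification of exponents of degree at most one. -/
lemma msplit (m : Fin n →₀ ℕ) :
    m = 0 ∨ (∃ j, m = Finsupp.single j 1) ∨ 2 ≤ m.degree := by
  have hdeg : m.degree = ∑ i, m i := by rw [← msum_degree, msum_eq]
  rcases Nat.lt_or_ge m.degree 2 with h2 | h2
  · have h01 : m.degree = 0 ∨ m.degree = 1 := by omega
    rcases h01 with h | h
    · exact Or.inl ((Finsupp.degree_eq_zero_iff m).mp h)
    · refine Or.inr (Or.inl ?_)
      have h1 : ∑ i, m i = 1 := by omega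
      have hj : ∃ j, m j ≠ 0 := by
        by_contra hc
        push_neg at hc
        have : ∑ i, m i = 0 := Finset.sum_eq_zero fun i _ => hc i
        omega
      obtain ⟨j, hj⟩ := hj
      have hsplit := Finset.add_sum_erase Finset.univ m (Finset.mem_univ j)
      have hmj : m j = 1 := by omega
      have hz : ∑ i ∈ Finset.univ.erase j, m i = 0 := by omega
      refine ⟨j, Finsupp.ext fun i => ?_⟩
      rcases eq_or_ne i j with rfl | hij
      · simp [Finsupp.single_apply, hmj]
      · have hmi := (Finset.sum_eq_zero_iff).mp hz i
          (Finset.mem_erase.mpr ⟨hij, Finset.mem_univ i⟩)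
        simp [Finsupp.single_apply, Ne.symm hij, hmi]
  · exact Or.inr (Or.inr h2)

lemma eq_C_add_Lform {a : MvPolynomial (Fin n) K} (ha : a.totalDegree ≤ 1) :
    a = C (constantCoeff a) + Lform (fun i => coeff (Finsupp.single i 1) a) := by
  ext m
  rw [coeff_add, coeff_Lform]
  rcases msplit m with rfl | ⟨⟨j, rfl⟩ | h2⟩
  · rw [Finset.sum_eq_zero fun i _ => by
      rw [if_neg (fun h => one_ne_zero (Finsupp.single_eq_zero.mp h)), mul_zero]]
    rw [coeff_C, if_pos rfl, add_zero, cc_eq]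
  · rw [Finset.sum_eq_single j]
    · rw [coeff_C, if_neg (fun h => (fun h => one_ne_zero (Finsupp.single_eq_zero.mp h)) h.symm)]
      simp
    · intro i _ hij
      rw [if_neg fun hcon => hij (Finsupp.single_left_injective one_ne_zero hcon), mul_zero]
    · simp
  · have hz : coeff m a = 0 := by
      apply coeff_eq_zero_of_totalDegree_lt
      have : m.degree = ∑ i ∈ m.support, m i := rfl
      omega
    have hcz : coeff m (C (constantCoeff a)) = 0 := by
      rw [coeff_C, if_neg]
      intro hcon
      rw [← hcon] at h2
      simp [map_zero] at h2
    rw [hz, hcz, Finset.sum_eq_zero fun i _ => ?_, add_zero]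
    rw [if_neg, mul_zero]
    intro hcon
    rw [← hcon] at h2
    have : (Finsupp.single i 1 : Fin n →₀ ℕ).degree = 1 := by
      rw [Finsupp.degree_single]
    omega

/-- Our working notion of homogeneity. -/
def Hom (q : MvPolynomial (Fin n) K) (d : ℕ) : Prop :=
  ∀ m : Fin n →₀ ℕ, coeff m q ≠ 0 → m.degree = d

lemma Hom_homogeneousComponent (k : ℕ) (p : MvPolynomial (Fin n) K) :
    Hom (homogeneousComponent k p) k := by
  intro m hm
  rw [coeff_homogeneousComponent] at hm
  by_contra h
  rw [if_neg h] at hm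
  exact hm rfl

lemma Hom_zero_eq_C {q : MvPolynomial (Fin n) K} (h : Hom q 0) :
    q = C (constantCoeff q) := by
  ext m
  rcases eq_or_ne m 0 with rfl | hm
  · rw [coeff_C, if_pos rfl, cc_eq]
  · rw [coeff_C, if_neg fun hc => hm hc.symm]
    by_contra hc
    exact hm ((Finsupp.degree_eq_zero_iff m).mp (h m hc))

lemma Hom_pderiv {q : MvPolynomial (Fin n) K} {d : ℕ} (h : Hom q (d + 1)) (i : Fin n) :
    Hom (pderiv i q) d := by
  intro m hm
  rw [aux_coeff_pderiv] at hm
  have h2 : coeff (m + Finsupp.single i 1) q ≠ 0 := by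
    intro h0; rw [h0, mul_zero] at hm; exact hm rfl
  have := h _ h2
  rw [← msum_degree, msum_add, msum_degree] at this
  omega

lemma euler {q : MvPolynomial (Fin n) K} {d : ℕ} (hq : Hom q d) :
    ∑ i, X i * pderiv i q = (d : K) • q := by
  ext m
  have hterm : ∀ i, coeff m (X i * pderiv i q) = (m i : K) * coeff m q := by
    intro i
    rw [coeff_X_mul']
    split_ifs with h
    · have hmi : m i ≠ 0 := Finsupp.mem_support_iff.mp h
      rw [aux_coeff_pderiv, msub_add hmi]
      have h1 : ((m - Finsupp.single i 1 : Fin n →₀ ℕ) i) = m i - 1 := by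
        simp [Finsupp.tsub_apply, Finsupp.single_apply]
      rw [h1]
      have h2 : ((m i - 1 : ℕ) : K) + 1 = (m i : K) := by
        have := Nat.succ_pred_eq_of_pos (Nat.pos_of_ne_zero hmi)
        push_cast [Nat.cast_sub (Nat.one_le_iff_ne_zero.mpr hmi)]
        ring
      rw [h2]
    · have hmi : m i = 0 := Finsupp.notMem_support_iff.mp h
      rw [hmi]
      simp
  rw [coeff_sum, Finset.sum_congr rfl fun i _ => hterm i, coeff_smul, ← Finset.sum_mul]
  rcases eq_or_ne (coeff m q) 0 with h0 | h0
  · rw [h0, mul_zero, smul_zero]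
  · have hd := hq m h0
    have : ∑ i, (m i : K) = (d : K) := by
      rw [← hd, ← msum_degree, msum_eq]
      push_cast
      rfl
    rw [this, smul_eq_mul]

lemma pderiv_homogeneousComponent (i : Fin n) (k : ℕ) (p : MvPolynomial (Fin n) K) :
    pderiv i (homogeneousComponent (k + 1) p) = homogeneousComponent k (pderiv i p) := by
  ext m
  rw [aux_coeff_pderiv, coeff_homogeneousComponent, coeff_homogeneousComponent,
    aux_coeff_pderiv]
  have hdeg : (m + Finsupp.single i 1 : Fin n →₀ ℕ).degree = m.degree + 1 := by
    rw [← msum_degree, msum_add, msum_degree]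
  by_cases h : m.degree = k
  · rw [if_pos (by omega), if_pos h]
  · rw [if_neg (by omega), if_neg h, mul_zero]

lemma Dop_homogeneousComponent {c : Fin n → K} {p : MvPolynomial (Fin n) K}
    (h : Dop c p = 0) (k : ℕ) : Dop c (homogeneousComponent k p) = 0 := by
  cases k with
  | zero =>
    rw [Hom_zero_eq_C (Hom_homogeneousComponent 0 p), Dop_C]
  | succ k =>
    have : Dop c (homogeneousComponent (k + 1) p)
        = homogeneousComponent k (Dop c p) := by
      rw [Dop, Dop, map_sum]
      exact Finset.sum_congr rfl fun i _ => by
        rw [pderiv_homogeneousComponent, map_smul]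
    rw [this, h, map_zero]

/-- Separation: for `w ∉ W` there is a "dot-product functional" vanishing on `W`
but not on `w`. -/
lemma exists_perp (W : Submodule K (Fin n → K)) {w : Fin n → K} (hw : w ∉ W) :
    ∃ c : Fin n → K, (∀ u ∈ W, ∑ i, c i * u i = 0) ∧ ∑ i, c i * w i ≠ 0 := by
  have hq : W.mkQ w ≠ 0 := by
    simpa [Submodule.Quotient.mk_eq_zero] using hw
  have : ¬ ∀ φ : Module.Dual K ((Fin n → K) ⧸ W), φ (W.mkQ w) = 0 := by
    rw [Module.forall_dual_apply_eq_zero_iff]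
    exact hq
  push_neg at this
  obtain ⟨φ, hφ⟩ := this
  set f : (Fin n → K) →ₗ[K] K := φ.comp W.mkQ with hf
  have key : ∀ v : Fin n → K, f v = ∑ i, v i * f (Pi.single i 1) := by
    intro v
    rw [LinearMap.pi_apply_eq_sum_univ f v]
    refine Finset.sum_congr rfl fun i _ => ?_
    rw [smul_eq_mul]
    have hps : (fun j => if i = j then (1:K) else 0) = Pi.single i 1 := by
      funext j
      simp [Pi.single_apply, eq_comm]
    rw [hps]
  refine ⟨fun i => f (Pi.single i 1), fun u hu => ?_, ?_⟩
  · have : f u = 0 := by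
      simp only [hf, LinearMap.comp_apply]
      have h0 : W.mkQ u = 0 := by
        simpa [Submodule.Quotient.mk_eq_zero] using hu
      rw [h0, map_zero]
    rw [← this, key u]
    exact Finset.sum_congr rfl fun i _ => mul_comm _ _
  · have : f w ≠ 0 := hφ
    intro hc
    apply this
    rw [key w, ← hc]
    exact Finset.sum_congr rfl fun i _ => mul_comm _ _

/-- Kernel lemma, homogeneous case: a polynomial all of whose directional
derivatives along `U` vanish lies in the algebra generated by linear forms
orthogonal to `U`. -/
lemma ker_hom (U : Submodule K (Fin n → K)) (d : ℕ) :
    ∀ q : MvPolynomial (Fin n) K, Hom q d → (∀ c ∈ U, Dop c q = 0) →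
    q ∈ Algebra.adjoin K
      {p : MvPolynomial (Fin n) K |
        ∃ b : Fin n → K, (∀ u ∈ U, ∑ i, b i * u i = 0) ∧ p = Lform b} := by
  induction d with
  | zero =>
    intro q hq _
    rw [Hom_zero_eq_C hq]
    exact Subalgebra.algebraMap_mem _ _
  | succ d ih =>
    intro q hq hder
    obtain ⟨U', hcompl⟩ := Submodule.exists_isCompl U
    set T : (Fin n → K) →ₗ[K] (Fin n → K) :=
      U.subtype.comp (U.projectionOnto U' hcompl) with hT
    have hTmem : ∀ v, T v ∈ U := fun v => by
      simp only [hT, LinearMap.comp_apply, Submodule.coe_subtype]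
      exact Submodule.coe_mem _
    have hTid : ∀ u ∈ U, T u = u := by
      intro u hu
      simp only [hT, LinearMap.comp_apply, Submodule.coe_subtype]
      rw [Submodule.projectionOnto_apply_left hcompl ⟨u, hu⟩]
  -- the matrix rows of `1 - T`
    set s : Fin n → Fin n → K :=
      fun j i => (Pi.single i (1 : K) : Fin n → K) j - T (Pi.single i 1) j with hs
    have hsperp : ∀ j, ∀ u ∈ U, ∑ i, s j i * u i = 0 := by
      intro j u hu
      have h1 : ∑ i, (Pi.single i (1 : K) : Fin n → K) j * u i = u j := by
        rw [Finset.sum_eq_single j]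
        · simp
        · intro i _ hij
          simp [Pi.single_eq_of_ne (Ne.symm hij)]
        · simp
      have h2 : ∑ i, (T (Pi.single i (1 : K))) j * u i = (T u) j := by
        have hu' : u = ∑ i : Fin n, u i • (Pi.single i (1 : K) : Fin n → K) := by
          ext j'
          simp [Finset.sum_apply, Pi.single_apply]
        conv_rhs => rw [hu']
        rw [map_sum]
        simp only [Finset.sum_apply, Pi.smul_apply, smul_eq_mul, map_smul]
        exact Finset.sum_congr rfl fun i _ => mul_comm _ _
      simp only [hs, sub_mul, Finset.sum_sub_distrib, h1, h2, hTid u hu, sub_self]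
    have hstar : ∀ i, pderiv i q = ∑ j, s j i • pderiv j q := by
      intro i
      have e1 : pderiv i q = Dop (Pi.single i 1) q := (Dop_single i q).symm
      have e2 : Dop (Pi.single i (1:K)) q
          = Dop (Pi.single i 1 - T (Pi.single i 1)) q + Dop (T (Pi.single i 1)) q := by
        rw [← Dop_add_c]
        congr 1
        ext j
        simp
      rw [e1, e2, hder _ (hTmem _), add_zero, Dop]
      exact Finset.sum_congr rfl fun j _ => rfl
    have heuler := euler hq
    have hsum : ∑ i, X i * pderiv i q = ∑ j, Lform (s j) * pderiv j q := by
      calc ∑ i, X i * pderiv i q = ∑ i, X i * ∑ j, s j i • pderiv j q := by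
            exact Finset.sum_congr rfl fun i _ => by rw [← hstar]
      _ = ∑ i, ∑ j, s j i • (X i * pderiv j q) := by
            exact Finset.sum_congr rfl fun i _ => by
              rw [Finset.mul_sum]
              exact Finset.sum_congr rfl fun j _ => mul_smul_comm (s j i) (X i) (pderiv j q)
      _ = ∑ j, ∑ i, s j i • (X i * pderiv j q) := Finset.sum_comm
      _ = ∑ j, Lform (s j) * pderiv j q := by
            refine Finset.sum_congr rfl fun j _ => ?_
            rw [Lform, Finset.sum_mul]
            exact Finset.sum_congr rfl fun i _ => by
              rw [smul_eq_C_mul, mul_assoc]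
    have hqeq : q = ((d : K) + 1)⁻¹ • ∑ j, Lform (s j) * pderiv j q := by
      rw [← hsum, heuler, smul_smul]
      have hone : ((d : K) + 1)⁻¹ * (((d + 1 : ℕ) : K)) = 1 := by
        push_cast
        exact inv_mul_cancel₀ (Nat.cast_add_one_ne_zero d)
      rw [hone, one_smul]
    rw [hqeq]
    refine Subalgebra.smul_mem _ (Subalgebra.sum_mem _ fun j _ => Subalgebra.mul_mem _ ?_ ?_) _
    · exact Algebra.subset_adjoin ⟨s j, hsperp j, rfl⟩
    · exact ih (pderiv j q) (Hom_pderiv hq j) fun c hc => by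
        rw [← pderiv_Dop, hder c hc, map_zero]

/-- Kernel lemma, general case. -/
lemma ker_all (U : Submodule K (Fin n → K)) (p : MvPolynomial (Fin n) K)
    (hder : ∀ c ∈ U, Dop c p = 0) :
    p ∈ Algebra.adjoin K
      {r : MvPolynomial (Fin n) K |
        ∃ b : Fin n → K, (∀ u ∈ U, ∑ i, b i * u i = 0) ∧ r = Lform b} := by
  rw [← sum_homogeneousComponent p]
  refine Subalgebra.sum_mem _ fun k _ => ?_
  exact ker_hom U k _ (Hom_homogeneousComponent k p)
    (fun c hc => Dop_homogeneousComponent (hder c hc) k)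

/-- The "perpendicular" submodule with respect to the dot product. -/
def perpSub (W : Submodule K (Fin n → K)) : Submodule K (Fin n → K) where
  carrier := {c | ∀ u ∈ W, ∑ i, c i * u i = 0}
  add_mem' := by
    intro a b ha hb u hu
    simp only [Set.mem_setOf_eq] at ha hb ⊢
    simp only [Pi.add_apply, add_mul, Finset.sum_add_distrib, ha u hu, hb u hu, add_zero]
  zero_mem' := by
    intro u hu
    simp
  smul_mem' := by
    intro r a ha u hu
    simp only [Set.mem_setOf_eq] at ha ⊢
    simp only [Pi.smul_apply, smul_eq_mul, mul_assoc, ← Finset.mul_sum, ha u hu, mul_zero]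

lemma mem_perpSub {W : Submodule K (Fin n → K)} {c : Fin n → K} :
    c ∈ perpSub W ↔ ∀ u ∈ W, ∑ i, c i * u i = 0 := Iff.rfl

lemma adjoin_stable (s : Set (MvPolynomial (Fin n) K))
    (hs : ∀ f ∈ s, ∀ i, pderiv i f ∈ Algebra.adjoin K s) :
    ∀ a ∈ Algebra.adjoin K s, ∀ i, pderiv i a ∈ Algebra.adjoin K s := by
  intro a ha
  induction ha using Algebra.adjoin_induction with
  | mem x hx => exact fun i => hs x hx i
  | algebraMap r =>
    intro i
    rw [MvPolynomial.algebraMap_eq, pderiv_C]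
    exact Subalgebra.zero_mem _
  | add x y hx hy ihx ihy =>
    intro i
    rw [map_add]
    exact add_mem (ihx i) (ihy i)
  | mul x y hx hy ihx ihy =>
    intro i
    rw [pderiv_mul]
    exact add_mem (mul_mem (ihx i) hy) (mul_mem hx (ihy i))

lemma Dop_eq_zero_on_adjoin (s : Set (MvPolynomial (Fin n) K)) (c : Fin n → K)
    (h : ∀ f ∈ s, Dop c f = 0) :
    ∀ a ∈ Algebra.adjoin K s, Dop c a = 0 := by
  intro a ha
  induction ha using Algebra.adjoin_induction with
  | mem x hx => exact h x hx
  | algebraMap r => rw [MvPolynomial.algebraMap_eq, Dop_C]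
  | add x y hx hy ihx ihy => rw [Dop_add, ihx, ihy, add_zero]
  | mul x y hx hy ihx ihy => rw [Dop_mul, ihx, ihy, zero_mul, mul_zero, add_zero]

lemma Dop_X (c : Fin n → K) (j : Fin n) :
    Dop c (X j : MvPolynomial (Fin n) K) = C (c j) := by
  rw [← Lform_single j, Dop_Lform]
  congr 1
  rw [Finset.sum_eq_single j]
  · simp
  · intro i _ hij
    rw [Pi.single_eq_of_ne hij, mul_zero]
  · simp

end NondegAux

open NondegAux

/-- A translation invariant subspace `V ⊆ K[x_1,…,x_n]` is non-degenerate (no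
nonzero linear combination of `∂/∂x_1,…,∂/∂x_n` annihilates `V`) if and only if
`V` generates `K[x_1,…,x_n]` as a `K`-algebra. -/
theorem nondegenerate_iff_generating
    {K : Type*} [Field K] [CharZero K] {n : ℕ}
    (V : Submodule K (MvPolynomial (Fin n) K))
    (hV : ∀ i : Fin n, ∀ f ∈ V, MvPolynomial.pderiv i f ∈ V) :
    (∀ c : Fin n → K,
        (∀ f ∈ V, (∑ i, c i • MvPolynomial.pderiv i f) = 0) → c = 0) ↔
    Algebra.adjoin K (V : Set (MvPolynomial (Fin n) K)) = ⊤ := by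
  classical
  constructor
  · intro hnd
    set A := Algebra.adjoin K (V : Set (MvPolynomial (Fin n) K)) with hA
    have hVA : (V : Set (MvPolynomial (Fin n) K)) ⊆ A := Algebra.subset_adjoin
    have hAst : ∀ a ∈ A, ∀ i, pderiv i a ∈ A :=
      adjoin_stable _ (fun f hf i => Algebra.subset_adjoin (hV i f hf))
    set lin : MvPolynomial (Fin n) K →ₗ[K] (Fin n → K) :=
      LinearMap.pi (fun i => MvPolynomial.lcoeff K (Finsupp.single i 1)) with hlin
    have hlin_apply : ∀ (a : MvPolynomial (Fin n) K) (i : Fin n),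
        lin a i = coeff (Finsupp.single i 1) a := fun a i => rfl
    set W : Submodule K (Fin n → K) :=
      Submodule.map lin ((restrictTotalDegree (Fin n) K 1) ⊓ (Subalgebra.toSubmodule A))
      with hW
    have hWmem : ∀ b ∈ W, Lform b ∈ A := by
      rintro b ⟨a, ⟨hadeg, haA⟩, rfl⟩
      have ha1 : a.totalDegree ≤ 1 := (mem_restrictTotalDegree _ _ _).mp hadeg
      have hdecomp := eq_C_add_Lform (a := a) ha1
      have hlform : Lform (lin a) = a - C (constantCoeff a) := by
        have : Lform (fun i => coeff (Finsupp.single i 1) a) = a - C (constantCoeff a) := by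
          rw [eq_sub_iff_add_eq, add_comm, ← hdecomp]
        convert this using 2
        exact funext fun i => hlin_apply a i
      rw [hlform]
      refine sub_mem haA ?_
      rw [← MvPolynomial.algebraMap_eq]
      exact Subalgebra.algebraMap_mem _ _
    have hWtop : W = ⊤ := by
      by_contra hne
      have hex : ∃ w, w ∉ W := by
        by_contra hall
        push_neg at hall
        exact hne (Submodule.eq_top_iff'.mpr hall)
      obtain ⟨w, hw⟩ := hex
      obtain ⟨c₀, hc₀perp, hc₀w⟩ := exists_perp W hw
      have hc₀ : c₀ ≠ 0 := by
        rintro rfl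
        simp at hc₀w
      have hfex : ∃ f ∈ V, Dop c₀ f ≠ 0 := by
        by_contra hcon
        push_neg at hcon
        exact hc₀ (hnd c₀ (fun f hf => hcon f hf))
      obtain ⟨f₀, hf₀V, hf₀⟩ := hfex
      have hgex : ∃ g ∈ V, constantCoeff (Dop c₀ g) ≠ 0 := by
        by_contra hcon
        push_neg at hcon
        exact hf₀ (Dop_eq_zero_of_stable (V : Set (MvPolynomial (Fin n) K))
          (fun f hf i => hV i f hf) c₀ hcon f₀ hf₀V)
      obtain ⟨g₀, hg₀V, hg₀⟩ := hgex
      have hPex : ∃ k : ℕ, ∃ g, g ∈ A ∧ ∃ c : Fin n → K,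
          (∀ u ∈ W, ∑ i, c i * u i = 0) ∧ g.totalDegree ≤ k ∧
          constantCoeff (Dop c g) ≠ 0 :=
        ⟨g₀.totalDegree, g₀, hVA hg₀V, c₀, hc₀perp, le_rfl, hg₀⟩
      set d := Nat.find hPex with hd
      obtain ⟨g, hgA, c, hcperp, hgdeg, hgne⟩ := Nat.find_spec hPex
      have hmin : ∀ a ∈ A, ∀ c' : Fin n → K, (∀ u ∈ W, ∑ i, c' i * u i = 0) →
          a.totalDegree < d → constantCoeff (Dop c' a) = 0 := by
        intro a haA c' hc' hlt
        by_contra hcon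
        exact Nat.find_min hPex hlt ⟨a, haA, c', hc', le_rfl, hcon⟩
      set SD : Set (MvPolynomial (Fin n) K) :=
        {a | a ∈ A ∧ (a = 0 ∨ a.totalDegree < d)} with hSD
      have hSDst : ∀ a ∈ SD, ∀ i, pderiv i a ∈ SD := by
        rintro a ⟨haA, hdeg⟩ i
        refine ⟨hAst a haA i, ?_⟩
        rcases hdeg with rfl | hlt
        · left; rw [map_zero]
        · rcases aux_pderiv_zero_or_lt i a with h | h
          · exact Or.inl h
          · exact Or.inr (h.trans hlt)
      have hSDzero : ∀ c' : Fin n → K, (∀ u ∈ W, ∑ i, c' i * u i = 0) →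
          ∀ a ∈ SD, Dop c' a = 0 := by
        intro c' hc'
        refine Dop_eq_zero_of_stable SD hSDst c' ?_
        rintro a ⟨haA, hdeg⟩
        rcases hdeg with rfl | hlt
        · rw [Dop_zero, map_zero]
        · exact hmin a haA c' hc' hlt
      have hgconst : ∀ c' : Fin n → K, (∀ u ∈ W, ∑ i, c' i * u i = 0) →
          Dop c' g = C (constantCoeff (Dop c' g)) := by
        intro c' hc'
        apply aux_eq_C_of_pderiv
        intro i
        rw [pderiv_Dop]
        rcases aux_pderiv_zero_or_lt i g with h | h
        · rw [h, Dop_zero]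
        · exact hSDzero c' hc' _ ⟨hAst g hgA i, Or.inr (lt_of_lt_of_le h hgdeg)⟩
      set b : Fin n → K := fun i => coeff (Finsupp.single i 1) g with hb
      set p : MvPolynomial (Fin n) K := g - C (constantCoeff g) - Lform b with hp
      have hpb : ∀ c' : Fin n → K, (∀ u ∈ W, ∑ i, c' i * u i = 0) → Dop c' p = 0 := by
        intro c' hc'
        obtain ⟨s0, hs0⟩ : ∃ s0, Dop c' g = C s0 := ⟨_, hgconst c' hc'⟩
        have h1 : Dop c' p = C (s0 - ∑ i, c' i * b i) := by
          rw [hp, Dop_sub, Dop_sub, Dop_C, sub_zero, Dop_Lform, hs0, ← map_sub]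
        have h2 : constantCoeff (Dop c' p) = 0 := by
          rw [constantCoeff_Dop]
          refine Finset.sum_eq_zero fun i _ => ?_
          have hcoeffp : coeff (Finsupp.single i 1) p = 0 := by
            rw [hp, coeff_sub, coeff_sub, coeff_single_Lform,
              coeff_C, if_neg (fun h => one_ne_zero (Finsupp.single_eq_zero.mp h.symm))]
            rw [hb]
            ring
          rw [hcoeffp, mul_zero]
        rw [h1] at h2 ⊢
        rw [constantCoeff_C] at h2
        rw [h2, map_zero]
      have hpA : p ∈ A := by
        have hker := ker_all (perpSub W) p (fun c' hc' => hpb c' hc')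
        have hsub : {r : MvPolynomial (Fin n) K |
            ∃ b' : Fin n → K, (∀ u ∈ perpSub W, ∑ i, b' i * u i = 0) ∧ r = Lform b'}
            ⊆ (A : Set (MvPolynomial (Fin n) K)) := by
          rintro r ⟨b', hb'perp, rfl⟩
          have hb'W : b' ∈ W := by
            by_contra hb'
            obtain ⟨c₂, hc₂perp, hc₂b⟩ := exists_perp W hb'
            have hz : ∑ i, b' i * c₂ i = 0 := hb'perp c₂ hc₂perp
            apply hc₂b
            rw [← hz]
            exact Finset.sum_congr rfl fun i _ => mul_comm _ _
          exact hWmem b' hb'W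
        exact Algebra.adjoin_le hsub hker
      have hLA : Lform b ∈ A := by
        have hlb : Lform b = g - C (constantCoeff g) - p := by
          rw [hp]
          ring
        rw [hlb]
        refine sub_mem (sub_mem hgA ?_) hpA
        rw [← MvPolynomial.algebraMap_eq]
        exact Subalgebra.algebraMap_mem _ _
      have hbW : b ∈ W := by
        refine ⟨Lform b, ⟨?_, hLA⟩, ?_⟩
        · exact (mem_restrictTotalDegree _ _ _).mpr (totalDegree_Lform b)
        · funext i
          rw [hlin_apply, coeff_single_Lform]
      apply hgne
      rw [constantCoeff_Dop]
      exact hcperp b hbW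
    have hX : ∀ j, (X j : MvPolynomial (Fin n) K) ∈ A := by
      intro j
      have hmem : (Pi.single j (1 : K)) ∈ W := hWtop ▸ Submodule.mem_top
      have := hWmem _ hmem
      rwa [Lform_single] at this
    have hle : Algebra.adjoin K (Set.range (X : Fin n → MvPolynomial (Fin n) K)) ≤ A :=
      Algebra.adjoin_le (by rintro _ ⟨j, rfl⟩; exact hX j)
    rw [MvPolynomial.adjoin_range_X] at hle
    exact eq_top_iff.mpr hle
  · intro htop c hc
    have hall := Dop_eq_zero_on_adjoin (V : Set (MvPolynomial (Fin n) K)) c hc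
    funext j
    have hXmem : (X j : MvPolynomial (Fin n) K) ∈ Algebra.adjoin K
        (V : Set (MvPolynomial (Fin n) K)) := by
      rw [htop]
      exact Algebra.mem_top
    have hXj := hall (X j) hXmem
    rw [Dop_X] at hXj
    exact MvPolynomial.C_eq_zero.mp hXj
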